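/- Let n and d' be positive integers with 1 ≤ d' < n/2, and let λ be a real number with 2/3 ≤ λ < 1 such that λd' is an integer ≥ 2. Set δ = d'/n. Then ∑_{w=1}^{λd'−1} C(n,w) · ∑_{i=1}^{d'} ∑_{j=⌈(w+i−d')/2⌉⁺}^{min{w,i}} C(w,j)·C(n−w,i−j) ≤ 2^{n·( H₂(δ) + H₂(λδ) )}. -/

import Mathlib

open Finset

/-- `⌈(w+i-d')/2⌉⁺`: the smallest nonnegative integer `m` with `m ≥ (w+i-d')/2`. -/
def ceilPos (w i d' : ℕ) : ℕ := (((w : ℤ) + i - d' + 1) / 2).toNat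

/-- The binary entropy function. -/
noncomputable def binH (x : ℝ) : ℝ := -x * Real.logb 2 x - (1 - x) * Real.logb 2 (1 - x)

/-- Entropy bound for partial binomial sums. -/
lemma sum_choose_le_rpow (n k : ℕ) (hk : 0 < k) (hkn : 2 * k < n) :
    ∑ i ∈ Finset.range (k + 1), (n.choose i : ℝ) ≤
      (2 : ℝ) ^ ((n : ℝ) * binH ((k : ℝ) / n)) := by
  have hn : (0 : ℝ) < n := by
    have : 0 < n := by omega
    exact_mod_cast this
  set p : ℝ := (k : ℝ) / n with hp
  have hp0 : 0 < p := by positivity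
  have hp2 : p < 1 / 2 := by
    rw [hp, div_lt_div_iff₀ hn two_pos]
    have := (Nat.cast_lt (α := ℝ)).2 hkn
    push_cast at this ⊢
    linarith
  have h1p : 0 < 1 - p := by linarith
  have hple : p ≤ 1 - p := by linarith
  have hkn' : k ≤ n := by omega
  have key : (∑ i ∈ Finset.range (k + 1), (n.choose i : ℝ)) * (p ^ k * (1 - p) ^ (n - k)) ≤ 1 := by
    rw [Finset.sum_mul]
    calc ∑ i ∈ Finset.range (k + 1), (n.choose i : ℝ) * (p ^ k * (1 - p) ^ (n - k))
        ≤ ∑ i ∈ Finset.range (k + 1), p ^ i * (1 - p) ^ (n - i) * n.choose i := by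
          apply Finset.sum_le_sum
          intro i hi
          simp only [Finset.mem_range] at hi
          have hik : i ≤ k := by omega
          rw [mul_comm]
          apply mul_le_mul_of_nonneg_right _ (Nat.cast_nonneg _)
          have e1 : p ^ k = p ^ i * p ^ (k - i) := by rw [← pow_add]; congr 1; omega
          have e2 : (1 - p) ^ (n - i) = (1 - p) ^ (k - i) * (1 - p) ^ (n - k) := by
            rw [← pow_add]; congr 1; omega
          rw [e1, e2]
          have : p ^ (k - i) ≤ (1 - p) ^ (k - i) := pow_le_pow_left₀ hp0.le hple _
          calc p ^ i * p ^ (k - i) * (1 - p) ^ (n - k)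
              ≤ p ^ i * (1 - p) ^ (k - i) * (1 - p) ^ (n - k) := by
                apply mul_le_mul_of_nonneg_right _ (by positivity)
                exact mul_le_mul_of_nonneg_left this (by positivity)
            _ = p ^ i * ((1 - p) ^ (k - i) * (1 - p) ^ (n - k)) := by ring
      _ ≤ ∑ i ∈ Finset.range (n + 1), p ^ i * (1 - p) ^ (n - i) * n.choose i := by
          apply Finset.sum_le_sum_of_subset_of_nonneg
          · exact Finset.range_subset_range.2 (by omega)
          · intro i _ _; positivity
      _ = (p + (1 - p)) ^ n := (add_pow p (1 - p) n).symm
      _ = 1 := by norm_num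
  have hpow : (0 : ℝ) < p ^ k * (1 - p) ^ (n - k) := by positivity
  have hle : ∑ i ∈ Finset.range (k + 1), (n.choose i : ℝ) ≤ (p ^ k * (1 - p) ^ (n - k))⁻¹ := by
    have h2 := mul_le_mul_of_nonneg_right key (inv_pos.2 hpow).le
    rwa [one_mul, mul_assoc, mul_inv_cancel₀ hpow.ne', mul_one] at h2
  refine hle.trans (le_of_eq ?_)
  have hnp : (n : ℝ) * p = k := by rw [hp]; field_simp
  have hn1p : (n : ℝ) * (1 - p) = ((n - k : ℕ) : ℝ) := by
    rw [Nat.cast_sub hkn', hp]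
    field_simp
  have hexp : (n : ℝ) * binH p =
      (-(k : ℝ)) * Real.logb 2 p + (-(((n - k : ℕ)) : ℝ)) * Real.logb 2 (1 - p) := by
    unfold binH
    linear_combination (-Real.logb 2 p) * hnp - Real.logb 2 (1 - p) * hn1p
  rw [hexp, Real.rpow_add two_pos, mul_inv]
  congr 1
  · rw [neg_mul, Real.rpow_neg two_pos.le]
    congr 1
    rw [mul_comm, Real.rpow_mul two_pos.le, Real.rpow_logb two_pos (by norm_num) hp0,
      Real.rpow_natCast]
  · rw [neg_mul, Real.rpow_neg two_pos.le]
    congr 1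
    rw [mul_comm, Real.rpow_mul two_pos.le, Real.rpow_logb two_pos (by norm_num) h1p,
      Real.rpow_natCast]
theorem statement17 (n d' : ℕ) (hd : 1 ≤ d') (hdn : 2 * d' < n)
    (lam : ℝ) (hlam0 : 2 / 3 ≤ lam) (hlam1 : lam < 1)
    (w0 : ℕ) (hw0 : (w0 : ℝ) = lam * (d' : ℝ)) (hw02 : 2 ≤ w0) :
    (∑ w ∈ Finset.Icc 1 (w0 - 1), (n.choose w : ℝ) *
      ∑ i ∈ Finset.Icc 1 d', ∑ j ∈ Finset.Icc (ceilPos w i d') (min w i),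
        (w.choose j : ℝ) * ((n - w).choose (i - j) : ℝ))
    ≤ (2 : ℝ) ^ ((n : ℝ) * (binH ((d' : ℝ) / n) + binH (lam * ((d' : ℝ) / n)))) := by
  have hw0d : w0 < d' := by
    have : (w0 : ℝ) < d' := by
      rw [hw0]
      have hd' : (0 : ℝ) < d' := by exact_mod_cast hd
      nlinarith
    exact_mod_cast this
  -- inner bound
  have inner : ∀ w ∈ Finset.Icc 1 (w0 - 1),
      (∑ i ∈ Finset.Icc 1 d', ∑ j ∈ Finset.Icc (ceilPos w i d') (min w i),
        (w.choose j : ℝ) * ((n - w).choose (i - j) : ℝ)) ≤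
      ∑ i ∈ Finset.range (d' + 1), (n.choose i : ℝ) := by
    intro w hw
    simp only [Finset.mem_Icc] at hw
    have hwn : w ≤ n := by omega
    have step1 : ∀ i : ℕ,
        (∑ j ∈ Finset.Icc (ceilPos w i d') (min w i),
          (w.choose j : ℝ) * ((n - w).choose (i - j) : ℝ)) ≤ (n.choose i : ℝ) := by
      intro i
      have hsub : Finset.Icc (ceilPos w i d') (min w i) ⊆ Finset.range (i + 1) := by
        intro j hj
        simp only [Finset.mem_Icc, Finset.mem_range] at hj ⊢
        omega
      have h1 : (∑ j ∈ Finset.Icc (ceilPos w i d') (min w i),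
          (w.choose j : ℝ) * ((n - w).choose (i - j) : ℝ)) ≤
          ∑ j ∈ Finset.range (i + 1), (w.choose j : ℝ) * ((n - w).choose (i - j) : ℝ) :=
        Finset.sum_le_sum_of_subset_of_nonneg hsub (fun j _ _ => by positivity)
      refine h1.trans (le_of_eq ?_)
      have : n.choose i = ∑ j ∈ Finset.range (i + 1), w.choose j * (n - w).choose (i - j) := by
        conv_lhs => rw [show n = w + (n - w) by omega]
        rw [Nat.add_choose_eq]
        rw [Finset.Nat.sum_antidiagonal_eq_sum_range_succ_mk]
      rw [this]
      push_cast
      rfl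
    calc (∑ i ∈ Finset.Icc 1 d', ∑ j ∈ Finset.Icc (ceilPos w i d') (min w i),
          (w.choose j : ℝ) * ((n - w).choose (i - j) : ℝ))
        ≤ ∑ i ∈ Finset.Icc 1 d', (n.choose i : ℝ) := Finset.sum_le_sum fun i _ => step1 i
      _ ≤ ∑ i ∈ Finset.range (d' + 1), (n.choose i : ℝ) := by
          apply Finset.sum_le_sum_of_subset_of_nonneg
          · intro i hi; simp only [Finset.mem_Icc, Finset.mem_range] at hi ⊢; omega
          · intro i _ _; positivity
  set Sd : ℝ := ∑ i ∈ Finset.range (d' + 1), (n.choose i : ℝ) with hSd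
  have hSd0 : 0 ≤ Sd := Finset.sum_nonneg fun i _ => by positivity
  have step2 : (∑ w ∈ Finset.Icc 1 (w0 - 1), (n.choose w : ℝ) *
      ∑ i ∈ Finset.Icc 1 d', ∑ j ∈ Finset.Icc (ceilPos w i d') (min w i),
        (w.choose j : ℝ) * ((n - w).choose (i - j) : ℝ)) ≤
      (∑ w ∈ Finset.range (w0 + 1), (n.choose w : ℝ)) * Sd := by
    calc (∑ w ∈ Finset.Icc 1 (w0 - 1), (n.choose w : ℝ) *
          ∑ i ∈ Finset.Icc 1 d', ∑ j ∈ Finset.Icc (ceilPos w i d') (min w i),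
            (w.choose j : ℝ) * ((n - w).choose (i - j) : ℝ))
        ≤ ∑ w ∈ Finset.Icc 1 (w0 - 1), (n.choose w : ℝ) * Sd := by
          apply Finset.sum_le_sum
          intro w hw
          exact mul_le_mul_of_nonneg_left (inner w hw) (Nat.cast_nonneg _)
      _ = (∑ w ∈ Finset.Icc 1 (w0 - 1), (n.choose w : ℝ)) * Sd := by rw [Finset.sum_mul]
      _ ≤ (∑ w ∈ Finset.range (w0 + 1), (n.choose w : ℝ)) * Sd := by
          apply mul_le_mul_of_nonneg_right _ hSd0
          apply Finset.sum_le_sum_of_subset_of_nonneg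
          · intro i hi; simp only [Finset.mem_Icc, Finset.mem_range] at hi ⊢; omega
          · intro i _ _; positivity
  have hb1 : Sd ≤ (2 : ℝ) ^ ((n : ℝ) * binH ((d' : ℝ) / n)) :=
    sum_choose_le_rpow n d' hd hdn
  have hb2 : (∑ w ∈ Finset.range (w0 + 1), (n.choose w : ℝ)) ≤
      (2 : ℝ) ^ ((n : ℝ) * binH ((w0 : ℝ) / n)) :=
    sum_choose_le_rpow n w0 (by omega) (by omega)
  have hSw0 : 0 ≤ ∑ w ∈ Finset.range (w0 + 1), (n.choose w : ℝ) :=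
    Finset.sum_nonneg fun i _ => by positivity
  have hw0n : (w0 : ℝ) / n = lam * ((d' : ℝ) / n) := by
    rw [hw0]; ring
  calc (∑ w ∈ Finset.Icc 1 (w0 - 1), (n.choose w : ℝ) *
        ∑ i ∈ Finset.Icc 1 d', ∑ j ∈ Finset.Icc (ceilPos w i d') (min w i),
          (w.choose j : ℝ) * ((n - w).choose (i - j) : ℝ))
      ≤ (∑ w ∈ Finset.range (w0 + 1), (n.choose w : ℝ)) * Sd := step2
    _ ≤ (2 : ℝ) ^ ((n : ℝ) * binH ((w0 : ℝ) / n)) * (2 : ℝ) ^ ((n : ℝ) * binH ((d' : ℝ) / n)) :=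
        mul_le_mul hb2 hb1 hSd0 (Real.rpow_nonneg (by norm_num) _)
    _ = (2 : ℝ) ^ ((n : ℝ) * (binH ((d' : ℝ) / n) + binH (lam * ((d' : ℝ) / n)))) := by
        rw [← Real.rpow_add two_pos, hw0n]
        ring_nf
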